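/- Failure of hypergraph-independence for nested knowledge with forwarding: Let N = {i,j,k,l}, H the line graph with edges {l,k},{k,j},{j,i}, p ∈ At_l, V = {p}, and M = {(l,{l,k},p),(k,{k,j},p),(j,{j,i},p)}. Then (V,M) is an H-compliant forwarding state with (V,M) ⊨_H K_i K_k p but (V,M) ⊭ K_i K_k p (complete-hypergraph semantics); moreover (V,M) ⊭_H C_{{i,k}} p. -/

import Mathlib

structure Msg (P A : Type) where
  sender : P
  grp : Set P
  fact : A

inductive Form (P A : Type) where
  | atom : A → Form P A
  | neg  : Form P A → Form P A
  | and  : Form P A → Form P A → Form P A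
  | or   : Form P A → Form P A → Form P A
  | ck   : Set P → Form P A → Form P A

/-- The negation-free (positive) fragment L⁺. -/
def Positive {P A : Type} : Form P A → Prop
  | .atom _ => True
  | .neg _ => False
  | .and φ ψ => Positive φ ∧ Positive ψ
  | .or φ ψ => Positive φ ∧ Positive ψ
  | .ck _ φ => Positive φ

/-- Atoms occurring in a formula. -/
def FactsF {P A : Type} : Form P A → Set A
  | .atom p => {p}
  | .neg φ => FactsF φ
  | .and φ ψ => FactsF φ ∪ FactsF ψ
  | .or φ ψ => FactsF φ ∪ FactsF ψ
  | .ck _ φ => FactsF φ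

/-- Facts occurring in a set of messages. -/
def Facts {P A : Type} (M : Set (Msg P A)) : Set A := {p | ∃ m ∈ M, m.fact = p}

/-- All messages are H-compliant. -/
def HComp {P A : Type} (H : Set (Set P)) (M : Set (Msg P A)) : Prop :=
  ∀ m ∈ M, m.grp ∈ H

/-- (j,B,p) ⤳ (i,A,p): p ∉ At_i and i ∈ B. -/
def leadsto {P A : Type} (owner : A → P) (m m' : Msg P A) : Prop :=
  m'.fact = m.fact ∧ owner m'.fact ≠ m'.sender ∧ m'.sender ∈ m.grp

/-- An explanation of a message m in (V,M): a non-circular ⤳-chain of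
    p-messages in M starting at a player who initially knows p = m.fact
    and ending at m. -/
def Explains {P A : Type} (owner : A → P) (V : Set A) (M : Set (Msg P A))
    (m : Msg P A) : Prop :=
  ∃ L : List (Msg P A),
    (∀ x ∈ L, x ∈ M) ∧
    List.Chain' (leadsto owner) L ∧
    (L.map Msg.sender).Nodup ∧
    (∀ x ∈ L, x.fact = m.fact) ∧
    (∃ m₀, L.head? = some m₀ ∧ owner m₀.fact = m₀.sender ∧ m₀.fact ∈ V) ∧
    L.getLast? = some m

/-- A forwarding state: every message has a sender in its group and an explanation. -/
def FwState {P A : Type} (owner : A → P) (V : Set A) (M : Set (Msg P A)) : Prop :=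
  ∀ m ∈ M, m.sender ∈ m.grp ∧ Explains owner V M m

/-- Indistinguishability for player i: equality of (V_i, M_i). -/
def indist {P A : Type} (owner : A → P) (i : P)
    (s t : Set A × Set (Msg P A)) : Prop :=
  {p ∈ s.1 | owner p = i} = {p ∈ t.1 | owner p = i} ∧
  {m ∈ s.2 | i ∈ m.grp} = {m ∈ t.2 | i ∈ m.grp}

/-- ∼_G: transitive closure of the union of the ∼_i, i ∈ G. -/
def reach {P A : Type} (owner : A → P) (G : Set P) :
    Set A × Set (Msg P A) → Set A × Set (Msg P A) → Prop :=
  Relation.TransGen (fun s t => ∃ i ∈ G, indist owner i s t)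

/-- Semantics ⊨_H (forwarding setting): C_G quantifies over H-compliant
    forwarding states. -/
def sat {P A : Type} (owner : A → P) (H : Set (Set P)) :
    Form P A → Set A → Set (Msg P A) → Prop
  | .atom p, V, _ => p ∈ V
  | .neg φ, V, M => ¬ sat owner H φ V M
  | .and φ ψ, V, M => sat owner H φ V M ∧ sat owner H ψ V M
  | .or φ ψ, V, M => sat owner H φ V M ∨ sat owner H ψ V M
  | .ck G φ, V, M => ∀ V' M', FwState owner V' M' → HComp H M' →
      reach owner G (V, M) (V', M') → sat owner H φ V' M'

/-- The complete hypergraph: all nonempty subsets of players. -/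
def completeH (P : Type) : Set (Set P) := {B | B.Nonempty}

private lemma reach_single_out {P A : Type} (owner : A → P) (i : P)
    {s t : Set A × Set (Msg P A)} (h : reach owner {i} s t) :
    indist owner i s t := by
  induction h with
  | single h =>
      obtain ⟨x, hx, h⟩ := h
      simp only [Set.mem_singleton_iff] at hx
      subst hx; exact h
  | tail _ h ih =>
      obtain ⟨x, hx, h⟩ := h
      simp only [Set.mem_singleton_iff] at hx
      subst hx
      exact ⟨ih.1.trans h.1, ih.2.trans h.2⟩

private lemma fact_in_V {P A : Type} (owner : A → P) {V : Set A}
    {M : Set (Msg P A)} {m : Msg P A}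
    (h : Explains owner V M m) : m.fact ∈ V := by
  obtain ⟨L, _, _, _, hfact, ⟨m₀, hh, _, hv⟩, _⟩ := h
  cases L with
  | nil => simp at hh
  | cons a t =>
      simp only [List.head?_cons, Option.some.injEq] at hh
      subst hh
      have := hfact a (List.mem_cons_self)
      rw [← this]; exact hv

theorem fw_ck_of_H_matters {P A : Type} [Fintype P] (owner : A → P)
    (i j k l : P)
    (hij : i ≠ j) (hik : i ≠ k) (hil : i ≠ l)
    (hjk : j ≠ k) (hjl : j ≠ l) (hkl : k ≠ l)
    (hall : ∀ x : P, x = i ∨ x = j ∨ x = k ∨ x = l)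
    (p : A) (hp : owner p = l)
    (H : Set (Set P)) (hH : H = {({l, k} : Set P), {k, j}, {j, i}})
    (V : Set A) (hV : V = {p})
    (M : Set (Msg P A))
    (hM : M = {⟨l, {l, k}, p⟩, ⟨k, {k, j}, p⟩, ⟨j, {j, i}, p⟩}) :
    FwState owner V M ∧ HComp H M ∧
    sat owner H (.ck {i} (.ck {k} (.atom p))) V M ∧
    ¬ sat owner (completeH P) (.ck {i} (.ck {k} (.atom p))) V M ∧
    ¬ sat owner H (.ck {i, k} (.atom p)) V M := by

  subst hH hV hM
  set ml : Msg P A := ⟨l, {l, k}, p⟩ with hml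
  set mk : Msg P A := ⟨k, {k, j}, p⟩ with hmk
  set mj : Msg P A := ⟨j, {j, i}, p⟩ with hmj
  -- Part 1: forwarding state
  have hfw : FwState owner {p} {ml, mk, mj} := by
    intro m hm
    simp only [Set.mem_insert_iff, Set.mem_singleton_iff] at hm
    rcases hm with rfl | rfl | rfl
    · refine ⟨by simp [hml], [ml], by simp, List.isChain_singleton _, by simp, by simp,
        ⟨ml, rfl, by simp [hml, hp], by simp [hml]⟩, by simp⟩
    · refine ⟨by simp [hmk], [ml, mk], by simp, ?_, ?_, by simp [hml, hmk],
        ⟨ml, rfl, by simp [hml, hp], by simp [hml]⟩, by simp⟩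
      · simp only [List.Chain', List.isChain_cons_cons, List.isChain_singleton, and_true]
        exact ⟨rfl, by simp [hmk, hml, hp]; exact hkl.symm, by simp [hmk, hml]⟩
      · simp [hml, hmk, hkl.symm]
    · refine ⟨by simp [hmj], [ml, mk, mj], by simp, ?_, ?_, by simp [hml, hmk, hmj],
        ⟨ml, rfl, by simp [hml, hp], by simp [hml]⟩, by simp⟩
      · simp only [List.Chain', List.isChain_cons_cons, List.isChain_singleton, and_true]
        refine ⟨⟨rfl, by simp [hmk, hml, hp]; exact hkl.symm, by simp [hmk, hml]⟩,
          rfl, by simp [hmj, hmk, hp]; exact hjl.symm, by simp [hmj, hmk]⟩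
      · simp [hml, hmk, hmj, hkl.symm, hjl.symm, hjk.symm]
  -- Part 2: H-compliance
  have hcomp : HComp {({l, k} : Set P), {k, j}, {j, i}} {ml, mk, mj} := by
    intro m hm
    simp only [Set.mem_insert_iff, Set.mem_singleton_iff] at hm
    rcases hm with rfl | rfl | rfl <;> simp [hml, hmk, hmj]
  refine ⟨hfw, hcomp, ?_, ?_, ?_⟩
  · -- K_i K_k p holds under H
    intro V' M' hfw' hcmp' hr
    have hi := reach_single_out owner i hr
    have hmjM' : mj ∈ M' := by
      have h1 : mj ∈ {m ∈ M' | i ∈ m.grp} := by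
        rw [← hi.2]
        exact ⟨by simp, by simp [hmj]⟩
      exact h1.1
    -- extract the k-message from the explanation of mj in M'
    obtain ⟨hsg, L, hLM, hch, hnd, hfact, ⟨m₀, hh, ho, hv⟩, hlast⟩ := hfw' mj hmjM'
    have hkey : ∃ mb ∈ M', mb.fact = p ∧ k ∈ mb.grp := by
      cases L with
      | nil => simp at hh
      | cons a t =>
        simp only [List.head?_cons, Option.some.injEq] at hh
        subst hh
        have haf : a.fact = p := hfact a (List.mem_cons_self)
        have has : a.sender = l := by rw [← ho, haf, hp]
        have haM : a ∈ M' := hLM a (List.mem_cons_self)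
        cases t with
        | nil =>
          exfalso
          have : a = mj := by simpa using hlast
          rw [this, hmj] at has
          exact hjl has
        | cons b t' =>
          have hbM : b ∈ M' := hLM b (by simp)
          have hbf : b.fact = p := hfact b (by simp)
          have hlb : leadsto owner a b := (List.isChain_cons_cons.1 hch).1
          have hbs : b.sender ≠ l := by
            intro hbl
            exact hlb.2.1 (by rw [hbf, hp, hbl])
          have hgrp : a.grp ∈ ({({l, k} : Set P), {k, j}, {j, i}} : Set (Set P)) :=
            hcmp' a haM
          have hla : l ∈ a.grp := has ▸ (hfw' a haM).1
          have hag : a.grp = {l, k} := by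
            simp only [Set.mem_insert_iff, Set.mem_singleton_iff] at hgrp
            rcases hgrp with h | h | h
            · exact h
            · exfalso; rw [h] at hla
              rcases hla with h' | h'
              · exact hkl h'.symm
              · exact hjl h'.symm
            · exfalso; rw [h] at hla
              rcases hla with h' | h'
              · exact hjl h'.symm
              · exact hil h'.symm
          have hbk : b.sender = k := by
            have := hlb.2.2
            rw [hag] at this
            rcases this with h' | h'
            · exact absurd h' hbs
            · exact h'
          exact ⟨b, hbM, hbf, hbk ▸ (hfw' b hbM).1⟩
    obtain ⟨mb, hmbM, hmbf, hmbk⟩ := hkey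
    intro V'' M'' hfw'' hcmp'' hr''
    have hk := reach_single_out owner k hr''
    have hmbM'' : mb ∈ M'' := by
      have h1 : mb ∈ {m ∈ M'' | k ∈ m.grp} := by
        rw [← hk.2]; exact ⟨hmbM, hmbk⟩
      exact h1.1
    have := fact_in_V owner (hfw'' mb hmbM'').2
    show p ∈ V''
    rwa [hmbf] at this
  · -- fails under the complete hypergraph
    intro hsat
    set ml' : Msg P A := ⟨l, {l, j}, p⟩ with hml'
    have hfw' : FwState owner {p} {ml', mj} := by
      intro m hm
      simp only [Set.mem_insert_iff, Set.mem_singleton_iff] at hm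
      rcases hm with rfl | rfl
      · exact ⟨by simp [hml'], [ml'], by simp, List.isChain_singleton _, by simp, by simp,
          ⟨ml', rfl, by simp [hml', hp], by simp [hml']⟩, by simp⟩
      · refine ⟨by simp [hmj], [ml', mj], by simp, ?_, ?_, by simp [hml', hmj],
          ⟨ml', rfl, by simp [hml', hp], by simp [hml']⟩, by simp⟩
        · simp only [List.Chain', List.isChain_cons_cons, List.isChain_singleton, and_true]
          exact ⟨rfl, by simp [hmj, hml', hp]; exact hjl.symm, by simp [hmj, hml']⟩
        · simp [hml', hmj, hjl.symm]
    have hcmp' : HComp (completeH P) {ml', mj} := by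
      intro m hm
      simp only [Set.mem_insert_iff, Set.mem_singleton_iff] at hm
      rcases hm with rfl | rfl
      · exact ⟨l, by simp [hml']⟩
      · exact ⟨j, by simp [hmj]⟩
    have hr : reach owner {i} (({p} : Set A), {ml, mk, mj}) (({p} : Set A), {ml', mj}) := by
      refine Relation.TransGen.single ⟨i, rfl, rfl, ?_⟩
      ext m
      simp only [Set.mem_setOf_eq, Set.mem_insert_iff, Set.mem_singleton_iff]
      constructor
      · rintro ⟨rfl | rfl | rfl, him⟩
        · exfalso; simp [hml] at him; rcases him with h | h
          exacts [hil h, hik h]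
        · exfalso; simp [hmk] at him; rcases him with h | h
          exacts [hik h, hij h]
        · exact ⟨Or.inr rfl, him⟩
      · rintro ⟨rfl | rfl, him⟩
        · exfalso; simp [hml'] at him; rcases him with h | h
          exacts [hil h, hij h]
        · exact ⟨Or.inr (Or.inr rfl), him⟩
    have hKk := hsat _ _ hfw' hcmp' hr
    have := hKk ∅ ∅ (by intro m hm; exact absurd hm (Set.notMem_empty m))
      (by intro m hm; exact absurd hm (Set.notMem_empty m)) ?_
    · exact absurd this (Set.notMem_empty p)
    · refine Relation.TransGen.single ⟨k, rfl, ?_, ?_⟩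
      · ext q
        simp only [Set.mem_setOf_eq, Set.mem_singleton_iff, Set.mem_empty_iff_false]
        constructor
        · rintro ⟨rfl, hq⟩; exact (hkl (by rw [← hq, hp])).elim
        · rintro ⟨h, _⟩; exact h.elim
      · ext m
        simp only [Set.mem_setOf_eq, Set.mem_insert_iff, Set.mem_singleton_iff,
          Set.mem_empty_iff_false]
        constructor
        · rintro ⟨rfl | rfl, hkm⟩
          · simp [hml'] at hkm; rcases hkm with h | h
            exacts [(hkl h).elim, (hjk h.symm).elim]
          · simp [hmj] at hkm; rcases hkm with h | h
            exacts [(hjk h.symm).elim, (hik h.symm).elim]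
        · rintro ⟨h, _⟩; exact h.elim
  · -- C_{i,k} p fails under H
    intro hsat
    have := hsat ∅ ∅ (by intro m hm; exact absurd hm (Set.notMem_empty m))
      (by intro m hm; exact absurd hm (Set.notMem_empty m)) ?_
    · exact absurd this (Set.notMem_empty p)
    · refine Relation.TransGen.tail (b := ((∅ : Set A), ({mj} : Set (Msg P A))))
        (Relation.TransGen.single ⟨i, by simp, ?_, ?_⟩) ⟨k, by simp, ?_, ?_⟩
      · -- V_i for step 1 : {p}_i = ∅_i
        ext q
        simp only [Set.mem_setOf_eq, Set.mem_singleton_iff, Set.mem_empty_iff_false]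
        constructor
        · rintro ⟨rfl, hq⟩; exact (hil (by rw [← hq, hp])).elim
        · rintro ⟨h, _⟩; exact h.elim
      · -- M_i = {mj}_i
        ext m
        simp only [Set.mem_setOf_eq, Set.mem_insert_iff, Set.mem_singleton_iff]
        constructor
        · rintro ⟨rfl | rfl | rfl, him⟩
          · exfalso; simp [hml] at him; rcases him with h | h
            exacts [hil h, hik h]
          · exfalso; simp [hmk] at him; rcases him with h | h
            exacts [hik h, hij h]
          · exact ⟨rfl, him⟩
        · rintro ⟨rfl, him⟩
          exact ⟨Or.inr (Or.inr rfl), him⟩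
      · -- V step 2: ∅ = ∅
        rfl
      · -- {mj}_k = ∅_k
        ext m
        simp only [Set.mem_setOf_eq, Set.mem_singleton_iff, Set.mem_empty_iff_false]
        constructor
        · rintro ⟨rfl, hkm⟩
          simp [hmj] at hkm; rcases hkm with h | h
          exacts [(hjk h.symm).elim, (hik h.symm).elim]
        · rintro ⟨h, _⟩; exact h.elim
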